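/- Let γ be a path in [n]×[k], write γ(i) = (a_i, b_i), and let 0 ≤ i ≤ n+k. (1) Assume n ≥ 1 and that one of the following holds: (i) i = 0 and γ(1) = (1,0); (ii) 0 < i < n+k and b_{i−1} = b_i = b_{i+1}; (iii) i = n+k and γ(n+k−1) = (n−1, k). Then there is a unique path γ̂ in [n−1]×[k] with (d_{a_i} × id) ∘ γ̂ = γ ∘ d_i, and E_γ(d_i(x), j) = (d_{a_i} × id)(E_{γ̂}(x, j)) for all (x,j) ∈ [n+k−1]×[k]. (2) Assume k ≥ 1 and that one of the following holds: (i) i = 0 and γ(1) = (0,1); (ii) 0 < i < n+k and a_{i−1} = a_i = a_{i+1}; (iii) i = n+k and γ(n+k−1) = (n, k−1). Then there is a unique path γ̂ in [n]×[k−1] with (id × d_{b_i}) ∘ γ̂ = γ ∘ d_i, and E_γ(d_i(x), d_{b_i}(y)) = (id × d_{b_i})(E_{γ̂}(x, y)) for all (x,y) ∈ [n+k−1]×[k−1]. -/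
import Mathlib


/-- `γ` is a path in `[n] × [k]` (a simplex of maximal dimension of `Δⁿ × Δᵏ`):
it starts at `(0,0)`, ends at `(n,k)`, and each step increases exactly one
coordinate by exactly `1`.  The parameter `m` records the length of the path;
necessarily `m = n + k`. -/
def IsPath (n k m : ℕ) (γ : Fin (m + 1) → Fin (n + 1) × Fin (k + 1)) : Prop :=
  γ 0 = (0, 0) ∧
  γ (Fin.last m) = (Fin.last n, Fin.last k) ∧
  ∀ i : Fin m,
    (((γ i.succ).1 : ℕ) = ((γ i.castSucc).1 : ℕ) + 1 ∧ (γ i.succ).2 = (γ i.castSucc).2) ∨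
    ((γ i.succ).1 = (γ i.castSucc).1 ∧ ((γ i.succ).2 : ℕ) = ((γ i.castSucc).2 : ℕ) + 1)

/-- The extension `E_γ : [n+k] × [k] → [n] × [k]` of a path `γ`, given by
`E_γ(i, j) = (a_i, max (b_i) j)` where `γ i = (a_i, b_i)`. -/
def pathExt (n k m : ℕ) (γ : Fin (m + 1) → Fin (n + 1) × Fin (k + 1)) :
    Fin (m + 1) × Fin (k + 1) → Fin (n + 1) × Fin (k + 1) :=
  fun p => ((γ p.1).1, max (γ p.1).2 p.2)

/-- The strict order on paths: `γ₁ < γ₂` if at the least index `s` where they differ the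
first coordinate of `γ₁ s` is smaller than that of `γ₂ s`. -/
def pathLT (n k m : ℕ) (γ₁ γ₂ : Fin (m + 1) → Fin (n + 1) × Fin (k + 1)) : Prop :=
  ∃ s : Fin (m + 1), γ₁ s ≠ γ₂ s ∧ (∀ t : Fin (m + 1), t < s → γ₁ t = γ₂ t) ∧
    (γ₁ s).1 < (γ₂ s).1


lemma sAv {N : ℕ} (p : Fin (N + 1)) (i : Fin N) :
    (p.succAbove i).val = if i.val < p.val then i.val else i.val + 1 := by
  rw [Fin.succAbove]
  by_cases h : i.castSucc < p
  · rw [if_pos h, if_pos (by simpa [Fin.lt_def] using h)]; rfl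
  · rw [if_neg h, if_neg (by simpa [Fin.lt_def] using h)]; rfl

def pull {N : ℕ} (a c : Fin (N + 2)) : Fin (N + 1) :=
  if h : c.val < a.val then ⟨c.val, by have := a.isLt; omega⟩
  else ⟨c.val - 1, by have := c.isLt; omega⟩

lemma pull_val {N : ℕ} (a c : Fin (N + 2)) :
    (pull a c).val = if c.val < a.val then c.val else c.val - 1 := by
  rw [pull]
  split <;> rename_i h <;> simp [h]

lemma pull_succAbove {N : ℕ} (a c : Fin (N + 2)) (h : c.val ≠ a.val) :
    a.succAbove (pull a c) = c := by
  apply Fin.ext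
  rw [sAv, pull_val]
  have := c.isLt
  split <;> rename_i h1
  · simp [h1]
  · rw [if_neg (by omega)]; omega

lemma succAbove_max {N : ℕ} (p : Fin (N + 2)) (u v : Fin (N + 1)) :
    p.succAbove (max u v) = max (p.succAbove u) (p.succAbove v) :=
  ((Fin.strictMono_succAbove p).monotone.map_max)

lemma path_mono1 {n k m : ℕ} {γ : Fin (m + 1) → Fin (n + 1) × Fin (k + 1)}
    (hγ : IsPath n k m γ) : Monotone fun j => ((γ j).1 : ℕ) := by
  rw [Fin.monotone_iff_le_succ]
  intro t
  rcases hγ.2.2 t with ⟨h1, _⟩ | ⟨h1, _⟩ <;> simp [h1]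

lemma path_mono2 {n k m : ℕ} {γ : Fin (m + 1) → Fin (n + 1) × Fin (k + 1)}
    (hγ : IsPath n k m γ) : Monotone fun j => ((γ j).2 : ℕ) := by
  rw [Fin.monotone_iff_le_succ]
  intro t
  rcases hγ.2.2 t with ⟨_, h2⟩ | ⟨_, h2⟩ <;> simp [h2]



lemma fin_app_congr {N : ℕ} {α : Sort*} (γ : Fin N → α) (u v : Fin N)
    (h : u.val = v.val) : γ u = γ v := congrArg γ (Fin.ext h)

lemma path_step2 {n k m : ℕ} {γ : Fin (m + 1) → Fin (n + 1) × Fin (k + 1)}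
    (hγ : IsPath n k m γ) (u v : Fin (m + 1)) (huv : v.val = u.val + 1) :
    (((γ v).1 : ℕ) = ((γ u).1 : ℕ) + 1 ∧ ((γ v).2 : ℕ) = ((γ u).2 : ℕ)) ∨
    (((γ v).1 : ℕ) = ((γ u).1 : ℕ) ∧ ((γ v).2 : ℕ) = ((γ u).2 : ℕ) + 1) := by
  have hu : u.val < m := by have := v.isLt; omega
  have e1 : γ u = γ ((⟨u.val, hu⟩ : Fin m).castSucc) := fin_app_congr γ _ _ rfl
  have e2 : γ v = γ ((⟨u.val, hu⟩ : Fin m).succ) := fin_app_congr γ _ _ (by simpa using huv)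
  rw [e1, e2]
  rcases hγ.2.2 ⟨u.val, hu⟩ with ⟨h1, h2⟩ | ⟨h1, h2⟩
  · exact Or.inl ⟨h1, congrArg Fin.val h2⟩
  · exact Or.inr ⟨congrArg Fin.val h1, h2⟩

lemma path_mono1' {n k m : ℕ} {γ : Fin (m + 1) → Fin (n + 1) × Fin (k + 1)}
    (hγ : IsPath n k m γ) (u v : Fin (m + 1)) (h : u.val ≤ v.val) :
    ((γ u).1 : ℕ) ≤ ((γ v).1 : ℕ) := path_mono1 hγ h

lemma path_mono2' {n k m : ℕ} {γ : Fin (m + 1) → Fin (n + 1) × Fin (k + 1)}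
    (hγ : IsPath n k m γ) (u v : Fin (m + 1)) (h : u.val ≤ v.val) :
    ((γ u).2 : ℕ) ≤ ((γ v).2 : ℕ) := path_mono2 hγ h

set_option maxHeartbeats 1000000 in
lemma master1 (n k : ℕ) (γ : Fin (n + k + 2) → Fin (n + 2) × Fin (k + 1))
    (hγ : IsPath (n + 1) k (n + k + 1) γ)
    (i : Fin (n + k + 2))
    (hi : (i = 0 ∧ γ 1 = (1, 0)) ∨
      (∃ p : Fin (n + k), i = p.succ.castSucc ∧
        (γ p.castSucc.castSucc).2 = (γ p.succ.castSucc).2 ∧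
        (γ p.succ.castSucc).2 = (γ p.succ.succ).2) ∨
      (i = Fin.last (n + k + 1) ∧
        γ (Fin.castSucc (Fin.last (n + k))) = (Fin.castSucc (Fin.last n), Fin.last k))) :
    ∃ γh : Fin (n + k + 1) → Fin (n + 1) × Fin (k + 1),
      IsPath n k (n + k) γh ∧
      (∀ x : Fin (n + k + 1),
        ((γ i).1.succAbove (γh x).1, (γh x).2) = γ (i.succAbove x)) ∧
      (∀ (x : Fin (n + k + 1)) (j : Fin (k + 1)),
        pathExt (n + 1) k (n + k + 1) γ (i.succAbove x, j) =
          ((γ i).1.succAbove (pathExt n k (n + k) γh (x, j)).1,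
            (pathExt n k (n + k) γh (x, j)).2)) ∧
      (∀ γh' : Fin (n + k + 1) → Fin (n + 1) × Fin (k + 1),
        IsPath n k (n + k) γh' →
        (∀ x : Fin (n + k + 1),
          ((γ i).1.succAbove (γh' x).1, (γh' x).2) = γ (i.succAbove x)) →
        γh' = γh) := by
  have ha0 : ((γ 0).1 : ℕ) = 0 := by rw [hγ.1]; exact Fin.val_zero _
  have hb0 : ((γ 0).2 : ℕ) = 0 := by rw [hγ.1]; exact Fin.val_zero _
  have halast : ((γ (Fin.last (n + k + 1))).1 : ℕ) = n + 1 := by rw [hγ.2.1]; rfl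
  have hblast : ((γ (Fin.last (n + k + 1))).2 : ℕ) = k := by rw [hγ.2.1]; rfl
  have hsv : ∀ y : Fin (n + k + 1),
      (i.succAbove y).val = if y.val < i.val then y.val else y.val + 1 := fun y => sAv i y
  -- Claim B
  have hB : ∀ j : Fin (n + k + 2),
      (j.val < i.val → ((γ j).1 : ℕ) < ((γ i).1 : ℕ)) ∧
      (i.val < j.val → ((γ i).1 : ℕ) < ((γ j).1 : ℕ)) := by
    rcases hi with ⟨hi0, hγ1⟩ | ⟨p, hip, hb1, hb2⟩ | ⟨hil, hpen⟩
    · intro j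
      have hiv : i.val = 0 := by rw [hi0]; exact Fin.val_zero _
      have hai : ((γ i).1 : ℕ) = 0 := by
        rw [fin_app_congr γ i 0 (by rw [hiv]; exact (Fin.val_zero _).symm)]; exact ha0
      have h1a : ((γ 1).1 : ℕ) = 1 := by rw [hγ1]; exact Fin.val_one _
      refine ⟨fun h => by omega, fun h => ?_⟩
      have hle : ((γ 1).1 : ℕ) ≤ ((γ j).1 : ℕ) :=
        path_mono1' hγ 1 j (by rw [Fin.val_one]; omega)
      omega
    · intro j
      have hpv : i.val = p.val + 1 := by rw [hip]; simp
      have hplt := p.isLt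
      have hs1 := path_step2 hγ p.castSucc.castSucc i (by simp [hpv])
      have hs2 := path_step2 hγ i p.succ.succ (by simp [hpv])
      have hb1' := congrArg Fin.val hb1
      have hb2' := congrArg Fin.val hb2
      have ei1 : γ p.succ.castSucc = γ i := fin_app_congr γ _ _ (by simp [hpv])
      rw [ei1] at hb1' hb2'
      have ha1 : ((γ i).1 : ℕ) = ((γ p.castSucc.castSucc).1 : ℕ) + 1 := by
        rcases hs1 with ⟨h1, _⟩ | ⟨_, h2⟩
        · exact h1
        · omega
      have ha2 : ((γ p.succ.succ).1 : ℕ) = ((γ i).1 : ℕ) + 1 := by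
        rcases hs2 with ⟨h1, _⟩ | ⟨_, h2⟩
        · exact h1
        · omega
      constructor
      · intro h
        have h1 : ((γ j).1 : ℕ) ≤ ((γ p.castSucc.castSucc).1 : ℕ) :=
          path_mono1' hγ j _ (by simp; omega)
        omega
      · intro h
        have h1 : ((γ p.succ.succ).1 : ℕ) ≤ ((γ j).1 : ℕ) :=
          path_mono1' hγ _ j (by simp [Fin.val_succ]; omega)
        omega
    · intro j
      have hiv : i.val = n + k + 1 := by rw [hil]; rfl
      have hjlt := j.isLt
      have hai : ((γ i).1 : ℕ) = n + 1 := by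
        rw [fin_app_congr γ i (Fin.last (n + k + 1)) (by rw [hiv]; rfl)]; exact halast
      refine ⟨fun h => ?_, fun h => by omega⟩
      have hpen1 : ((γ (Fin.castSucc (Fin.last (n + k)))).1 : ℕ) = n := by rw [hpen]; rfl
      have h1 : ((γ j).1 : ℕ) ≤ ((γ (Fin.castSucc (Fin.last (n + k)))).1 : ℕ) :=
        path_mono1' hγ j _ (by simp; omega)
      omega
  -- endpoint fact at 0
  have H1 : ((((γ (i.succAbove (0 : Fin (n + k + 1)))).1 : ℕ) = 0 ∧ 0 < (((γ i).1 : ℕ))) ∨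
      (((γ (i.succAbove (0 : Fin (n + k + 1)))).1 : ℕ) = 1 ∧ (((γ i).1 : ℕ)) = 0)) ∧
      ((γ (i.succAbove (0 : Fin (n + k + 1)))).2 : ℕ) = 0 := by
    have hv := hsv 0
    rw [Fin.val_zero] at hv
    by_cases h0 : i.val = 0
    · have hvv : (i.succAbove (0 : Fin (n + k + 1))).val = (1 : Fin (n + k + 2)).val := by
        rw [hv, if_neg (by omega), Fin.val_one]
      have hγ1 : γ 1 = (1, 0) := by
        rcases hi with ⟨_, h⟩ | ⟨p, hip, _⟩ | ⟨hil, _⟩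
        · exact h
        · exfalso; have : i.val = p.val + 1 := by rw [hip]; simp
          omega
        · exfalso; have : i.val = n + k + 1 := by rw [hil]; rfl
          omega
      have e := fin_app_congr γ _ _ hvv
      rw [e, hγ1]
      have hai : ((γ i).1 : ℕ) = 0 := by
        rw [fin_app_congr γ i 0 (by rw [h0]; exact (Fin.val_zero _).symm)]; exact ha0
      exact ⟨Or.inr ⟨Fin.val_one _, hai⟩, Fin.val_zero _⟩
    · have hvv : (i.succAbove (0 : Fin (n + k + 1))).val = (0 : Fin (n + k + 2)).val := by
        rw [hv, if_pos (by omega), Fin.val_zero]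
      have e := fin_app_congr γ _ _ hvv
      rw [e]
      have hlt : ((γ 0).1 : ℕ) < ((γ i).1 : ℕ) := (hB 0).1 (by rw [Fin.val_zero]; omega)
      exact ⟨Or.inl ⟨ha0, by omega⟩, hb0⟩
  -- endpoint fact at last
  have H2 : ((((γ (i.succAbove (Fin.last (n + k)))).1 : ℕ) = n ∧
        ((γ (i.succAbove (Fin.last (n + k)))).1 : ℕ) < ((γ i).1 : ℕ)) ∨
      (((γ (i.succAbove (Fin.last (n + k)))).1 : ℕ) = n + 1 ∧ ((γ i).1 : ℕ) ≤ n + 1)) ∧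
      ((γ (i.succAbove (Fin.last (n + k)))).2 : ℕ) = k := by
    have hv := hsv (Fin.last (n + k))
    have hlastv : (Fin.last (n + k)).val = n + k := rfl
    by_cases h0 : i.val = n + k + 1
    · have hvv : (i.succAbove (Fin.last (n + k))).val = (Fin.castSucc (Fin.last (n + k))).val := by
        rw [hv, hlastv, if_pos (by omega)]; rfl
      have hpen : γ (Fin.castSucc (Fin.last (n + k))) = (Fin.castSucc (Fin.last n), Fin.last k) := by
        rcases hi with ⟨hi0, _⟩ | ⟨p, hip, _⟩ | ⟨_, h⟩
        · exfalso; have : i.val = 0 := by rw [hi0]; exact Fin.val_zero _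
          omega
        · exfalso; have : i.val = p.val + 1 := by rw [hip]; simp
          have := p.isLt; omega
        · exact h
      have e := fin_app_congr γ _ _ hvv
      rw [e, hpen]
      have hai : ((γ i).1 : ℕ) = n + 1 := by
        rw [fin_app_congr γ i (Fin.last (n + k + 1)) (by rw [h0]; rfl)]; exact halast
      refine ⟨Or.inl ⟨rfl, ?_⟩, rfl⟩
      show (n : ℕ) < ((γ i).1 : ℕ)
      omega
    · have hilt := i.isLt
      have hvv : (i.succAbove (Fin.last (n + k))).val = (Fin.last (n + k + 1)).val := by
        rw [hv, hlastv, if_neg (by omega)]; rfl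
      have e := fin_app_congr γ _ _ hvv
      rw [e]
      have := (γ (Fin.last (n + k + 1))).1.isLt
      have hile : ((γ i).1 : ℕ) ≤ n + 1 := by have := (γ i).1.isLt; omega
      exact ⟨Or.inr ⟨halast, hile⟩, hblast⟩
  -- middle fact
  have H3 : ∀ x : Fin (n + k), i.val = x.val + 1 →
      ((γ (i.succAbove x.castSucc)).1 : ℕ) + 1 = ((γ i).1 : ℕ) ∧
      ((γ (i.succAbove x.succ)).1 : ℕ) = ((γ i).1 : ℕ) + 1 ∧
      ((γ (i.succAbove x.castSucc)).2 : ℕ) = ((γ (i.succAbove x.succ)).2 : ℕ) := by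
    intro x hix
    have hxlt := x.isLt
    rcases hi with ⟨hi0, _⟩ | ⟨p, hip, hb1, hb2⟩ | ⟨hil, _⟩
    · exfalso; have : i.val = 0 := by rw [hi0]; exact Fin.val_zero _
      omega
    · have hpv : i.val = p.val + 1 := by rw [hip]; simp
      have hpx : p.val = x.val := by omega
      have hu : (i.succAbove x.castSucc).val = x.val := by
        rw [hsv, Fin.coe_castSucc, if_pos (by omega)]
      have hvv : (i.succAbove x.succ).val = x.val + 1 + 1 := by
        rw [hsv, Fin.val_succ, if_neg (by omega)]
      have eu : γ (i.succAbove x.castSucc) = γ p.castSucc.castSucc :=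
        fin_app_congr γ _ _ (by simp [hu, hpx])
      have ev : γ (i.succAbove x.succ) = γ p.succ.succ :=
        fin_app_congr γ _ _ (by simp [hvv, Fin.val_succ, hpx])
      have ei1 : γ p.succ.castSucc = γ i := fin_app_congr γ _ _ (by simp [hpv])
      have hb1' := congrArg Fin.val hb1
      have hb2' := congrArg Fin.val hb2
      rw [ei1] at hb1' hb2'
      have hs1 := path_step2 hγ p.castSucc.castSucc i (by simp [hpv])
      have hs2 := path_step2 hγ i p.succ.succ (by simp [hpv])
      rw [eu, ev]
      refine ⟨?_, ?_, by omega⟩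
      · rcases hs1 with ⟨h1, _⟩ | ⟨_, h2⟩
        · omega
        · omega
      · rcases hs2 with ⟨h1, _⟩ | ⟨_, h2⟩
        · omega
        · omega
    · exfalso; have : i.val = n + k + 1 := by rw [hil]; rfl
      omega
  -- the lifted path
  have hne : ∀ x : Fin (n + k + 1), ((γ (i.succAbove x)).1 : ℕ) ≠ (((γ i).1 : ℕ)) := by
    intro x
    have hx : (i.succAbove x).val ≠ i.val := by
      have h := Fin.succAbove_ne i x
      exact fun hh => h (Fin.ext hh)
    rcases Nat.lt_or_ge (i.succAbove x).val i.val with h | h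
    · exact Nat.ne_of_lt ((hB _).1 h)
    · exact Nat.ne_of_gt ((hB _).2 (by omega))
  have hcomm : ∀ x : Fin (n + k + 1),
      ((γ i).1.succAbove (pull (γ i).1 (γ (i.succAbove x)).1), (γ (i.succAbove x)).2) =
        γ (i.succAbove x) := by
    intro x
    rw [pull_succAbove (γ i).1 (γ (i.succAbove x)).1 (hne x)]
  refine ⟨fun x => (pull (γ i).1 (γ (i.succAbove x)).1, (γ (i.succAbove x)).2),
    ⟨?_, ?_, ?_⟩, hcomm, ?_, ?_⟩
  · show (pull (γ i).1 (γ (i.succAbove 0)).1, (γ (i.succAbove 0)).2) = (0, 0)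
    obtain ⟨H1a, H1b⟩ := H1
    simp only [Prod.mk.injEq]
    refine ⟨Fin.ext ?_, Fin.ext ?_⟩
    · rw [pull_val, Fin.val_zero]
      split_ifs <;> omega
    · rw [H1b, Fin.val_zero]
  · show (pull (γ i).1 (γ (i.succAbove (Fin.last (n + k)))).1,
        (γ (i.succAbove (Fin.last (n + k)))).2) = (Fin.last n, Fin.last k)
    obtain ⟨H2a, H2b⟩ := H2
    simp only [Prod.mk.injEq]
    refine ⟨Fin.ext ?_, Fin.ext ?_⟩
    · rw [pull_val]
      show _ = n
      split_ifs <;> omega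
    · rw [H2b]; rfl
  · intro x
    have hx := x.isLt
    show (((pull (γ i).1 (γ (i.succAbove x.succ)).1 : Fin (n + 1)) : ℕ) =
        ((pull (γ i).1 (γ (i.succAbove x.castSucc)).1 : Fin (n + 1)) : ℕ) + 1 ∧
        (γ (i.succAbove x.succ)).2 = (γ (i.succAbove x.castSucc)).2) ∨
      (pull (γ i).1 (γ (i.succAbove x.succ)).1 = pull (γ i).1 (γ (i.succAbove x.castSucc)).1 ∧
        ((γ (i.succAbove x.succ)).2 : ℕ) = ((γ (i.succAbove x.castSucc)).2 : ℕ) + 1)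
    by_cases hA1 : x.val + 1 < i.val
    · have hu : (i.succAbove x.castSucc).val = x.val := by
        rw [hsv, Fin.coe_castSucc, if_pos (by omega)]
      have hv : (i.succAbove x.succ).val = x.val + 1 := by
        rw [hsv, Fin.val_succ, if_pos (by omega)]
      have hst := path_step2 hγ _ _
        (show (i.succAbove x.succ).val = (i.succAbove x.castSucc).val + 1 by omega)
      have hBu := (hB (i.succAbove x.castSucc)).1 (by omega)
      have hBv := (hB (i.succAbove x.succ)).1 (by omega)
      rcases hst with ⟨h1, h2⟩ | ⟨h1, h2⟩
      · left
        refine ⟨?_, Fin.ext h2⟩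
        rw [pull_val, pull_val]
        split_ifs <;> omega
      · right
        refine ⟨Fin.ext ?_, h2⟩
        rw [pull_val, pull_val]
        split_ifs <;> omega
    · by_cases hA2 : i.val = x.val + 1
      · obtain ⟨h1, h2, h3⟩ := H3 x hA2
        have hu : (i.succAbove x.castSucc).val = x.val := by
          rw [hsv, Fin.coe_castSucc, if_pos (by omega)]
        have hv : (i.succAbove x.succ).val = x.val + 1 + 1 := by
          rw [hsv, Fin.val_succ, if_neg (by omega)]
        have hBu := (hB (i.succAbove x.castSucc)).1 (by omega)
        have hBv := (hB (i.succAbove x.succ)).2 (by omega)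
        left
        refine ⟨?_, Fin.ext h3.symm⟩
        rw [pull_val, pull_val]
        split_ifs <;> omega
      · have hu : (i.succAbove x.castSucc).val = x.val + 1 := by
          rw [hsv, Fin.coe_castSucc, if_neg (by omega)]
        have hv : (i.succAbove x.succ).val = x.val + 1 + 1 := by
          rw [hsv, Fin.val_succ, if_neg (by omega)]
        have hst := path_step2 hγ _ _
          (show (i.succAbove x.succ).val = (i.succAbove x.castSucc).val + 1 by omega)
        have hBu := (hB (i.succAbove x.castSucc)).2 (by omega)
        have hBv := (hB (i.succAbove x.succ)).2 (by omega)
        rcases hst with ⟨h1, h2⟩ | ⟨h1, h2⟩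
        · left
          refine ⟨?_, Fin.ext h2⟩
          rw [pull_val, pull_val]
          split_ifs <;> omega
        · right
          refine ⟨Fin.ext ?_, h2⟩
          rw [pull_val, pull_val]
          split_ifs <;> omega
  · intro x j
    show ((γ (i.succAbove x)).1, max (γ (i.succAbove x)).2 j) =
      ((γ i).1.succAbove (pull (γ i).1 (γ (i.succAbove x)).1),
        max (γ (i.succAbove x)).2 j)
    rw [pull_succAbove (γ i).1 (γ (i.succAbove x)).1 (hne x)]
  · intro γh' hp' hc'
    funext x
    have h := (hc' x).trans (hcomm x).symm
    rw [Prod.mk.injEq] at h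
    exact Prod.ext (Fin.succAbove_right_injective h.1) h.2

set_option maxHeartbeats 1000000 in
lemma master2 (n k : ℕ) (γ : Fin (n + k + 2) → Fin (n + 1) × Fin (k + 2))
    (hγ : IsPath n (k + 1) (n + k + 1) γ)
    (i : Fin (n + k + 2))
    (hi : (i = 0 ∧ γ 1 = (0, 1)) ∨
      (∃ p : Fin (n + k), i = p.succ.castSucc ∧
        (γ p.castSucc.castSucc).1 = (γ p.succ.castSucc).1 ∧
        (γ p.succ.castSucc).1 = (γ p.succ.succ).1) ∨
      (i = Fin.last (n + k + 1) ∧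
        γ (Fin.castSucc (Fin.last (n + k))) = (Fin.last n, Fin.castSucc (Fin.last k)))) :
    ∃ γh : Fin (n + k + 1) → Fin (n + 1) × Fin (k + 1),
      IsPath n k (n + k) γh ∧
      (∀ x : Fin (n + k + 1),
        ((γh x).1, (γ i).2.succAbove (γh x).2) = γ (i.succAbove x)) ∧
      (∀ (x : Fin (n + k + 1)) (y : Fin (k + 1)),
        pathExt n (k + 1) (n + k + 1) γ (i.succAbove x, (γ i).2.succAbove y) =
          ((pathExt n k (n + k) γh (x, y)).1,
            (γ i).2.succAbove (pathExt n k (n + k) γh (x, y)).2)) ∧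
      (∀ γh' : Fin (n + k + 1) → Fin (n + 1) × Fin (k + 1),
        IsPath n k (n + k) γh' →
        (∀ x : Fin (n + k + 1),
          ((γh' x).1, (γ i).2.succAbove (γh' x).2) = γ (i.succAbove x)) →
        γh' = γh) := by
  have ha0 : ((γ 0).1 : ℕ) = 0 := by rw [hγ.1]; exact Fin.val_zero _
  have hb0 : ((γ 0).2 : ℕ) = 0 := by rw [hγ.1]; exact Fin.val_zero _
  have halast : ((γ (Fin.last (n + k + 1))).1 : ℕ) = n := by rw [hγ.2.1]; rfl
  have hblast : ((γ (Fin.last (n + k + 1))).2 : ℕ) = k + 1 := by rw [hγ.2.1]; rfl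
  have hsv : ∀ y : Fin (n + k + 1),
      (i.succAbove y).val = if y.val < i.val then y.val else y.val + 1 := fun y => sAv i y
  -- Claim B (for second coordinates)
  have hB : ∀ j : Fin (n + k + 2),
      (j.val < i.val → ((γ j).2 : ℕ) < ((γ i).2 : ℕ)) ∧
      (i.val < j.val → ((γ i).2 : ℕ) < ((γ j).2 : ℕ)) := by
    rcases hi with ⟨hi0, hγ1⟩ | ⟨p, hip, hb1, hb2⟩ | ⟨hil, hpen⟩
    · intro j
      have hiv : i.val = 0 := by rw [hi0]; exact Fin.val_zero _
      have hai : ((γ i).2 : ℕ) = 0 := by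
        rw [fin_app_congr γ i 0 (by rw [hiv]; exact (Fin.val_zero _).symm)]; exact hb0
      have h1a : ((γ 1).2 : ℕ) = 1 := by rw [hγ1]; exact Fin.val_one _
      refine ⟨fun h => by omega, fun h => ?_⟩
      have hle : ((γ 1).2 : ℕ) ≤ ((γ j).2 : ℕ) :=
        path_mono2' hγ 1 j (by rw [Fin.val_one]; omega)
      omega
    · intro j
      have hpv : i.val = p.val + 1 := by rw [hip]; simp
      have hplt := p.isLt
      have hs1 := path_step2 hγ p.castSucc.castSucc i (by simp [hpv])
      have hs2 := path_step2 hγ i p.succ.succ (by simp [hpv])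
      have hb1' := congrArg Fin.val hb1
      have hb2' := congrArg Fin.val hb2
      have ei1 : γ p.succ.castSucc = γ i := fin_app_congr γ _ _ (by simp [hpv])
      rw [ei1] at hb1' hb2'
      have ha1 : ((γ i).2 : ℕ) = ((γ p.castSucc.castSucc).2 : ℕ) + 1 := by
        rcases hs1 with ⟨h1, _⟩ | ⟨_, h2⟩
        · omega
        · exact h2
      have ha2 : ((γ p.succ.succ).2 : ℕ) = ((γ i).2 : ℕ) + 1 := by
        rcases hs2 with ⟨h1, _⟩ | ⟨_, h2⟩
        · omega
        · exact h2
      constructor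
      · intro h
        have h1 : ((γ j).2 : ℕ) ≤ ((γ p.castSucc.castSucc).2 : ℕ) :=
          path_mono2' hγ j _ (by simp; omega)
        omega
      · intro h
        have h1 : ((γ p.succ.succ).2 : ℕ) ≤ ((γ j).2 : ℕ) :=
          path_mono2' hγ _ j (by simp [Fin.val_succ]; omega)
        omega
    · intro j
      have hiv : i.val = n + k + 1 := by rw [hil]; rfl
      have hjlt := j.isLt
      have hai : ((γ i).2 : ℕ) = k + 1 := by
        rw [fin_app_congr γ i (Fin.last (n + k + 1)) (by rw [hiv]; rfl)]; exact hblast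
      refine ⟨fun h => ?_, fun h => by omega⟩
      have hpen1 : ((γ (Fin.castSucc (Fin.last (n + k)))).2 : ℕ) = k := by rw [hpen]; rfl
      have h1 : ((γ j).2 : ℕ) ≤ ((γ (Fin.castSucc (Fin.last (n + k)))).2 : ℕ) :=
        path_mono2' hγ j _ (by simp; omega)
      omega
  -- endpoint fact at 0
  have H1 : ((((γ (i.succAbove (0 : Fin (n + k + 1)))).2 : ℕ) = 0 ∧ 0 < (((γ i).2 : ℕ))) ∨
      (((γ (i.succAbove (0 : Fin (n + k + 1)))).2 : ℕ) = 1 ∧ (((γ i).2 : ℕ)) = 0)) ∧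
      ((γ (i.succAbove (0 : Fin (n + k + 1)))).1 : ℕ) = 0 := by
    have hv := hsv 0
    rw [Fin.val_zero] at hv
    by_cases h0 : i.val = 0
    · have hvv : (i.succAbove (0 : Fin (n + k + 1))).val = (1 : Fin (n + k + 2)).val := by
        rw [hv, if_neg (by omega), Fin.val_one]
      have hγ1 : γ 1 = (0, 1) := by
        rcases hi with ⟨_, h⟩ | ⟨p, hip, _⟩ | ⟨hil, _⟩
        · exact h
        · exfalso; have : i.val = p.val + 1 := by rw [hip]; simp
          omega
        · exfalso; have : i.val = n + k + 1 := by rw [hil]; rfl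
          omega
      have e := fin_app_congr γ _ _ hvv
      rw [e, hγ1]
      have hai : ((γ i).2 : ℕ) = 0 := by
        rw [fin_app_congr γ i 0 (by rw [h0]; exact (Fin.val_zero _).symm)]; exact hb0
      exact ⟨Or.inr ⟨Fin.val_one _, hai⟩, Fin.val_zero _⟩
    · have hvv : (i.succAbove (0 : Fin (n + k + 1))).val = (0 : Fin (n + k + 2)).val := by
        rw [hv, if_pos (by omega), Fin.val_zero]
      have e := fin_app_congr γ _ _ hvv
      rw [e]
      have hlt : ((γ 0).2 : ℕ) < ((γ i).2 : ℕ) := (hB 0).1 (by rw [Fin.val_zero]; omega)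
      exact ⟨Or.inl ⟨hb0, by omega⟩, ha0⟩
  -- endpoint fact at last
  have H2 : ((((γ (i.succAbove (Fin.last (n + k)))).2 : ℕ) = k ∧
        ((γ (i.succAbove (Fin.last (n + k)))).2 : ℕ) < ((γ i).2 : ℕ)) ∨
      (((γ (i.succAbove (Fin.last (n + k)))).2 : ℕ) = k + 1 ∧ ((γ i).2 : ℕ) ≤ k + 1)) ∧
      ((γ (i.succAbove (Fin.last (n + k)))).1 : ℕ) = n := by
    have hv := hsv (Fin.last (n + k))
    have hlastv : (Fin.last (n + k)).val = n + k := rfl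
    by_cases h0 : i.val = n + k + 1
    · have hvv : (i.succAbove (Fin.last (n + k))).val = (Fin.castSucc (Fin.last (n + k))).val := by
        rw [hv, hlastv, if_pos (by omega)]; rfl
      have hpen : γ (Fin.castSucc (Fin.last (n + k))) = (Fin.last n, Fin.castSucc (Fin.last k)) := by
        rcases hi with ⟨hi0, _⟩ | ⟨p, hip, _⟩ | ⟨_, h⟩
        · exfalso; have : i.val = 0 := by rw [hi0]; exact Fin.val_zero _
          omega
        · exfalso; have : i.val = p.val + 1 := by rw [hip]; simp
          have := p.isLt; omega
        · exact h
      have e := fin_app_congr γ _ _ hvv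
      rw [e, hpen]
      have hai : ((γ i).2 : ℕ) = k + 1 := by
        rw [fin_app_congr γ i (Fin.last (n + k + 1)) (by rw [h0]; rfl)]; exact hblast
      refine ⟨Or.inl ⟨rfl, ?_⟩, rfl⟩
      show (k : ℕ) < ((γ i).2 : ℕ)
      omega
    · have hilt := i.isLt
      have hvv : (i.succAbove (Fin.last (n + k))).val = (Fin.last (n + k + 1)).val := by
        rw [hv, hlastv, if_neg (by omega)]; rfl
      have e := fin_app_congr γ _ _ hvv
      rw [e]
      have hile : ((γ i).2 : ℕ) ≤ k + 1 := by have := (γ i).2.isLt; omega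
      exact ⟨Or.inr ⟨hblast, hile⟩, halast⟩
  -- middle fact
  have H3 : ∀ x : Fin (n + k), i.val = x.val + 1 →
      ((γ (i.succAbove x.castSucc)).2 : ℕ) + 1 = ((γ i).2 : ℕ) ∧
      ((γ (i.succAbove x.succ)).2 : ℕ) = ((γ i).2 : ℕ) + 1 ∧
      ((γ (i.succAbove x.castSucc)).1 : ℕ) = ((γ (i.succAbove x.succ)).1 : ℕ) := by
    intro x hix
    have hxlt := x.isLt
    rcases hi with ⟨hi0, _⟩ | ⟨p, hip, hb1, hb2⟩ | ⟨hil, _⟩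
    · exfalso; have : i.val = 0 := by rw [hi0]; exact Fin.val_zero _
      omega
    · have hpv : i.val = p.val + 1 := by rw [hip]; simp
      have hpx : p.val = x.val := by omega
      have hu : (i.succAbove x.castSucc).val = x.val := by
        rw [hsv, Fin.coe_castSucc, if_pos (by omega)]
      have hvv : (i.succAbove x.succ).val = x.val + 1 + 1 := by
        rw [hsv, Fin.val_succ, if_neg (by omega)]
      have eu : γ (i.succAbove x.castSucc) = γ p.castSucc.castSucc :=
        fin_app_congr γ _ _ (by simp [hu, hpx])
      have ev : γ (i.succAbove x.succ) = γ p.succ.succ :=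
        fin_app_congr γ _ _ (by simp [hvv, Fin.val_succ, hpx])
      have ei1 : γ p.succ.castSucc = γ i := fin_app_congr γ _ _ (by simp [hpv])
      have hb1' := congrArg Fin.val hb1
      have hb2' := congrArg Fin.val hb2
      rw [ei1] at hb1' hb2'
      have hs1 := path_step2 hγ p.castSucc.castSucc i (by simp [hpv])
      have hs2 := path_step2 hγ i p.succ.succ (by simp [hpv])
      rw [eu, ev]
      refine ⟨?_, ?_, by omega⟩
      · rcases hs1 with ⟨h1, _⟩ | ⟨_, h2⟩
        · omega
        · omega
      · rcases hs2 with ⟨h1, _⟩ | ⟨_, h2⟩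
        · omega
        · omega
    · exfalso; have : i.val = n + k + 1 := by rw [hil]; rfl
      omega
  -- the lifted path
  have hne : ∀ x : Fin (n + k + 1), ((γ (i.succAbove x)).2 : ℕ) ≠ (((γ i).2 : ℕ)) := by
    intro x
    have hx : (i.succAbove x).val ≠ i.val := by
      have h := Fin.succAbove_ne i x
      exact fun hh => h (Fin.ext hh)
    rcases Nat.lt_or_ge (i.succAbove x).val i.val with h | h
    · exact Nat.ne_of_lt ((hB _).1 h)
    · exact Nat.ne_of_gt ((hB _).2 (by omega))
  have hcomm : ∀ x : Fin (n + k + 1),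
      ((γ (i.succAbove x)).1, (γ i).2.succAbove (pull (γ i).2 (γ (i.succAbove x)).2)) =
        γ (i.succAbove x) := by
    intro x
    rw [pull_succAbove (γ i).2 (γ (i.succAbove x)).2 (hne x)]
  refine ⟨fun x => ((γ (i.succAbove x)).1, pull (γ i).2 (γ (i.succAbove x)).2),
    ⟨?_, ?_, ?_⟩, hcomm, ?_, ?_⟩
  · show ((γ (i.succAbove 0)).1, pull (γ i).2 (γ (i.succAbove 0)).2) = (0, 0)
    obtain ⟨H1a, H1b⟩ := H1
    simp only [Prod.mk.injEq]
    refine ⟨Fin.ext ?_, Fin.ext ?_⟩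
    · rw [H1b, Fin.val_zero]
    · rw [pull_val, Fin.val_zero]
      split_ifs <;> omega
  · show ((γ (i.succAbove (Fin.last (n + k)))).1,
        pull (γ i).2 (γ (i.succAbove (Fin.last (n + k)))).2) = (Fin.last n, Fin.last k)
    obtain ⟨H2a, H2b⟩ := H2
    simp only [Prod.mk.injEq]
    refine ⟨Fin.ext ?_, Fin.ext ?_⟩
    · rw [H2b]; rfl
    · rw [pull_val]
      show _ = k
      split_ifs <;> omega
  · intro x
    have hx := x.isLt
    show (((γ (i.succAbove x.succ)).1 : ℕ) = ((γ (i.succAbove x.castSucc)).1 : ℕ) + 1 ∧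
        pull (γ i).2 (γ (i.succAbove x.succ)).2 = pull (γ i).2 (γ (i.succAbove x.castSucc)).2) ∨
      ((γ (i.succAbove x.succ)).1 = (γ (i.succAbove x.castSucc)).1 ∧
        ((pull (γ i).2 (γ (i.succAbove x.succ)).2 : Fin (k + 1)) : ℕ) =
          ((pull (γ i).2 (γ (i.succAbove x.castSucc)).2 : Fin (k + 1)) : ℕ) + 1)
    by_cases hA1 : x.val + 1 < i.val
    · have hu : (i.succAbove x.castSucc).val = x.val := by
        rw [hsv, Fin.coe_castSucc, if_pos (by omega)]
      have hv : (i.succAbove x.succ).val = x.val + 1 := by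
        rw [hsv, Fin.val_succ, if_pos (by omega)]
      have hst := path_step2 hγ _ _
        (show (i.succAbove x.succ).val = (i.succAbove x.castSucc).val + 1 by omega)
      have hBu := (hB (i.succAbove x.castSucc)).1 (by omega)
      have hBv := (hB (i.succAbove x.succ)).1 (by omega)
      rcases hst with ⟨h1, h2⟩ | ⟨h1, h2⟩
      · left
        refine ⟨h1, Fin.ext ?_⟩
        rw [pull_val, pull_val]
        split_ifs <;> omega
      · right
        refine ⟨Fin.ext h1, ?_⟩
        rw [pull_val, pull_val]
        split_ifs <;> omega
    · by_cases hA2 : i.val = x.val + 1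
      · obtain ⟨h1, h2, h3⟩ := H3 x hA2
        have hu : (i.succAbove x.castSucc).val = x.val := by
          rw [hsv, Fin.coe_castSucc, if_pos (by omega)]
        have hv : (i.succAbove x.succ).val = x.val + 1 + 1 := by
          rw [hsv, Fin.val_succ, if_neg (by omega)]
        have hBu := (hB (i.succAbove x.castSucc)).1 (by omega)
        have hBv := (hB (i.succAbove x.succ)).2 (by omega)
        right
        refine ⟨Fin.ext h3.symm, ?_⟩
        rw [pull_val, pull_val]
        split_ifs <;> omega
      · have hu : (i.succAbove x.castSucc).val = x.val + 1 := by
          rw [hsv, Fin.coe_castSucc, if_neg (by omega)]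
        have hv : (i.succAbove x.succ).val = x.val + 1 + 1 := by
          rw [hsv, Fin.val_succ, if_neg (by omega)]
        have hst := path_step2 hγ _ _
          (show (i.succAbove x.succ).val = (i.succAbove x.castSucc).val + 1 by omega)
        have hBu := (hB (i.succAbove x.castSucc)).2 (by omega)
        have hBv := (hB (i.succAbove x.succ)).2 (by omega)
        rcases hst with ⟨h1, h2⟩ | ⟨h1, h2⟩
        · left
          refine ⟨h1, Fin.ext ?_⟩
          rw [pull_val, pull_val]
          split_ifs <;> omega
        · right
          refine ⟨Fin.ext h1, ?_⟩
          rw [pull_val, pull_val]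
          split_ifs <;> omega
  · intro x y
    show ((γ (i.succAbove x)).1, max (γ (i.succAbove x)).2 ((γ i).2.succAbove y)) =
      ((γ (i.succAbove x)).1,
        (γ i).2.succAbove (max (pull (γ i).2 (γ (i.succAbove x)).2) y))
    rw [succAbove_max, pull_succAbove (γ i).2 (γ (i.succAbove x)).2 (hne x)]
  · intro γh' hp' hc'
    funext x
    have h := (hc' x).trans (hcomm x).symm
    rw [Prod.mk.injEq] at h
    exact Prod.ext h.1 (Fin.succAbove_right_injective h.2)

/-- Faces of path extensions.  Part (1): for a path `γ` in `[n+1] × [k]` and an index `i`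
satisfying one of the conditions (i) `i = 0` and `γ 1 = (1,0)`; (ii) `0 < i < n+1+k` and
`b_{i-1} = b_i = b_{i+1}`; (iii) `i` is the last index and `γ (n+k) = (n, k)`, there is a
unique path `γ̂` in `[n] × [k]` with `(d_{a_i} × id) ∘ γ̂ = γ ∘ d_i`, and
`E_γ (d_i x, j) = (d_{a_i} × id) (E_{γ̂} (x, j))`.
Part (2): the analogous statement for a path `γ` in `[n] × [k+1]`, with the roles of the
coordinates interchanged, producing `γ̂` in `[n] × [k]` with `(id × d_{b_i}) ∘ γ̂ = γ ∘ d_i`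
and `E_γ (d_i x, d_{b_i} y) = (id × d_{b_i}) (E_{γ̂} (x, y))`. -/
theorem pathExt_faces (n k : ℕ) :
    (∀ (γ : Fin (n + k + 2) → Fin (n + 2) × Fin (k + 1)),
      IsPath (n + 1) k (n + k + 1) γ →
      ∀ i : Fin (n + k + 2),
        ((i = 0 ∧ γ 1 = (1, 0)) ∨
          (∃ p : Fin (n + k), i = p.succ.castSucc ∧
            (γ p.castSucc.castSucc).2 = (γ p.succ.castSucc).2 ∧
            (γ p.succ.castSucc).2 = (γ p.succ.succ).2) ∨
          (i = Fin.last (n + k + 1) ∧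
            γ (Fin.castSucc (Fin.last (n + k))) = (Fin.castSucc (Fin.last n), Fin.last k))) →
        ∃ γh : Fin (n + k + 1) → Fin (n + 1) × Fin (k + 1),
          IsPath n k (n + k) γh ∧
          (∀ x : Fin (n + k + 1),
            ((γ i).1.succAbove (γh x).1, (γh x).2) = γ (i.succAbove x)) ∧
          (∀ (x : Fin (n + k + 1)) (j : Fin (k + 1)),
            pathExt (n + 1) k (n + k + 1) γ (i.succAbove x, j) =
              ((γ i).1.succAbove (pathExt n k (n + k) γh (x, j)).1,
                (pathExt n k (n + k) γh (x, j)).2)) ∧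
          (∀ γh' : Fin (n + k + 1) → Fin (n + 1) × Fin (k + 1),
            IsPath n k (n + k) γh' →
            (∀ x : Fin (n + k + 1),
              ((γ i).1.succAbove (γh' x).1, (γh' x).2) = γ (i.succAbove x)) →
            γh' = γh)) ∧
    (∀ (γ : Fin (n + k + 2) → Fin (n + 1) × Fin (k + 2)),
      IsPath n (k + 1) (n + k + 1) γ →
      ∀ i : Fin (n + k + 2),
        ((i = 0 ∧ γ 1 = (0, 1)) ∨
          (∃ p : Fin (n + k), i = p.succ.castSucc ∧
            (γ p.castSucc.castSucc).1 = (γ p.succ.castSucc).1 ∧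
            (γ p.succ.castSucc).1 = (γ p.succ.succ).1) ∨
          (i = Fin.last (n + k + 1) ∧
            γ (Fin.castSucc (Fin.last (n + k))) = (Fin.last n, Fin.castSucc (Fin.last k)))) →
        ∃ γh : Fin (n + k + 1) → Fin (n + 1) × Fin (k + 1),
          IsPath n k (n + k) γh ∧
          (∀ x : Fin (n + k + 1),
            ((γh x).1, (γ i).2.succAbove (γh x).2) = γ (i.succAbove x)) ∧
          (∀ (x : Fin (n + k + 1)) (y : Fin (k + 1)),
            pathExt n (k + 1) (n + k + 1) γ (i.succAbove x, (γ i).2.succAbove y) =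
              ((pathExt n k (n + k) γh (x, y)).1,
                (γ i).2.succAbove (pathExt n k (n + k) γh (x, y)).2)) ∧
          (∀ γh' : Fin (n + k + 1) → Fin (n + 1) × Fin (k + 1),
            IsPath n k (n + k) γh' →
            (∀ x : Fin (n + k + 1),
              ((γh' x).1, (γ i).2.succAbove (γh' x).2) = γ (i.succAbove x)) →
            γh' = γh)) := by
  exact ⟨fun γ hγ i hi => master1 n k γ hγ i hi,
    fun γ hγ i hi => master2 n k γ hγ i hi⟩
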